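/- Let X be a scheme and let 𝒞 be an affine open cover of X. The map sending the isomorphism class of a closed immersion φ : Y → X to the family (ker φ♯_U)_{U ∈ 𝒞} of ideals of the rings O_X(U) is injective on isomorphism classes of closed immersions into X. -/

import Mathlib

open AlgebraicGeometry CategoryTheory
open CategoryTheory.Limits

lemma ker_morphismRestrict {Y X : Scheme} (f : Y ⟶ X) (U : X.Opens) :
    RingHom.ker ((f ∣_ U).appTop.hom) = RingHom.ker (f.app (U.ι ''ᵁ ⊤)).hom := by
  rw [morphismRestrict_appTop]
  have hinj : Function.Injective (Y.presheaf.map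
      (eqToHom (image_morphismRestrict_preimage f U ⊤)).op) :=
    (ConcreteCategory.bijective_of_isIso _).1
  ext a
  simp only [RingHom.mem_ker]
  constructor
  · intro h
    exact hinj (by rw [map_zero]; exact h)
  · intro h
    show Y.presheaf.map _ (f.app (U.ι ''ᵁ ⊤) a) = 0
    erw [h, map_zero]

lemma lift_of_isAffine {Y' Z' W : Scheme} [IsAffine W] (f : Y' ⟶ W) (g : Z' ⟶ W)
    [IsClosedImmersion f] [IsClosedImmersion g]
    (hker : RingHom.ker g.appTop.hom ≤ RingHom.ker f.appTop.hom) :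
    ∃ θ : Y' ⟶ Z', θ ≫ g = f := by
  obtain ⟨hZaff, hg⟩ := IsClosedImmersion.isAffine_surjective_of_isAffine g
  have hYaff := (IsClosedImmersion.isAffine_surjective_of_isAffine f).1
  let e := RingHom.quotientKerEquivOfSurjective hg
  let χ : Γ(Z', ⊤) ⟶ Γ(Y', ⊤) :=
    CommRingCat.ofHom ((Ideal.Quotient.lift (RingHom.ker g.appTop.hom) f.appTop.hom fun a ha => hker ha).comp
      (e.symm : Γ(Z', ⊤) →+* _))
  have hχ : g.appTop ≫ χ = f.appTop := by
    ext a
    show χ.hom (g.appTop.hom a) = f.appTop.hom a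
    have h1 : e.symm (g.appTop.hom a) = Ideal.Quotient.mk _ a := by
      apply e.injective
      rw [RingEquiv.apply_symm_apply]
      simp [e, RingHom.quotientKerEquivOfSurjective]
    show (Ideal.Quotient.lift (RingHom.ker g.appTop.hom) f.appTop.hom fun a ha => hker ha)
      (e.symm (g.appTop.hom a)) = f.appTop.hom a
    rw [h1]; exact Ideal.Quotient.lift_mk _ _ _
  refine ⟨Y'.toSpecΓ ≫ Spec.map χ ≫ Z'.isoSpec.inv, ?_⟩
  rw [← cancel_mono W.toSpecΓ]
  simp only [Category.assoc, Scheme.toSpecΓ_naturality]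
  rw [show Z'.toSpecΓ = Z'.isoSpec.hom from rfl, Iso.inv_hom_id_assoc,
    ← Spec.map_comp, hχ]

lemma lift_of_ker_le {Y Z X : Scheme} (φ : Y ⟶ X) (ψ : Z ⟶ X)
    [IsClosedImmersion φ] [IsClosedImmersion ψ]
    {ι : Type*} (U : ι → X.Opens) (hUaff : ∀ i, IsAffineOpen (U i)) (hUcov : ⨆ i, U i = ⊤)
    (h : ∀ i, RingHom.ker (ψ.app (U i)).hom ≤ RingHom.ker (φ.app (U i)).hom) :
    ∃ θ : Y ⟶ Z, θ ≫ ψ = φ := by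
  have hcov' : ⨆ i, φ ⁻¹ᵁ U i = ⊤ := by
    rw [eq_top_iff]; intro y _
    have : φ.base y ∈ ⨆ i, U i := by rw [hUcov]; trivial
    obtain ⟨i, hi⟩ := TopologicalSpace.Opens.mem_iSup.mp this
    exact TopologicalSpace.Opens.mem_iSup.mpr ⟨i, hi⟩
  have key : ∀ i, ∃ θi : (φ ⁻¹ᵁ U i).toScheme ⟶ Z, θi ≫ ψ = (φ ⁻¹ᵁ U i).ι ≫ φ := by
    intro i
    haveI : IsAffine (U i).toScheme := hUaff i
    haveI h1 : IsClosedImmersion (φ ∣_ U i) :=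
      IsZariskiLocalAtTarget.restrict ‹IsClosedImmersion φ› (U i)
    haveI h2 : IsClosedImmersion (ψ ∣_ U i) :=
      IsZariskiLocalAtTarget.restrict ‹IsClosedImmersion ψ› (U i)
    have hker : RingHom.ker ((ψ ∣_ U i).appTop.hom) ≤ RingHom.ker ((φ ∣_ U i).appTop.hom) := by
      rw [ker_morphismRestrict, ker_morphismRestrict]
      have h' : ∀ (V : X.Opens), V = U i →
          RingHom.ker (ψ.app V).hom ≤ RingHom.ker (φ.app V).hom := by
        rintro V rfl; exact h i
      exact h' _ (Scheme.Opens.ι_image_top (U i))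
    obtain ⟨θi', hθi'⟩ := lift_of_isAffine (φ ∣_ U i) (ψ ∣_ U i) hker
    refine ⟨θi' ≫ (ψ ⁻¹ᵁ U i).ι, ?_⟩
    rw [Category.assoc, ← morphismRestrict_ι ψ (U i), ← Category.assoc, hθi',
      morphismRestrict_ι]
  choose θi hθi using key
  have hj : ∀ y : Y, ∃ i, y ∈ φ ⁻¹ᵁ U i := by
    intro y
    have : y ∈ ⨆ i, φ ⁻¹ᵁ U i := by rw [hcov']; trivial
    exact TopologicalSpace.Opens.mem_iSup.mp this
  choose j hjmem using hj
  let 𝒰 := Y.openCoverOfIsOpenCover (fun y : Y => φ ⁻¹ᵁ U (j y))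
    (by rw [TopologicalSpace.IsOpenCover, eq_top_iff]; intro y _; exact TopologicalSpace.Opens.mem_iSup.mpr ⟨y, hjmem y⟩)
  have hcompat : ∀ x y : Y, pullback.fst (𝒰.f x) (𝒰.f y) ≫ θi (j x) =
      pullback.snd (𝒰.f x) (𝒰.f y) ≫ θi (j y) := by
    intro x y
    erw [← cancel_mono ψ, Category.assoc, Category.assoc, hθi, hθi,
      ← Category.assoc, ← Category.assoc]
    congr 1
    exact pullback.condition
  refine ⟨𝒰.glueMorphisms (fun y => θi (j y)) hcompat, 𝒰.hom_ext _ _ fun y => ?_⟩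
  erw [← Category.assoc, 𝒰.ι_glueMorphisms, hθi]
  rfl

theorem ker_app_family_injective {Y Z X : Scheme} (φ : Y ⟶ X) (ψ : Z ⟶ X)
    [IsClosedImmersion φ] [IsClosedImmersion ψ]
    {ι : Type*} (U : ι → X.Opens) (hUaff : ∀ i, IsAffineOpen (U i))
    (hUcov : ⨆ i, U i = ⊤)
    (h : ∀ i, RingHom.ker (φ.app (U i)).hom = RingHom.ker (ψ.app (U i)).hom) :
    ∃ θ : Y ≅ Z, θ.hom ≫ ψ = φ := by
  obtain ⟨θ, hθ⟩ := lift_of_ker_le φ ψ U hUaff hUcov (fun i => (h i).ge)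
  obtain ⟨η, hη⟩ := lift_of_ker_le ψ φ U hUaff hUcov (fun i => (h i).le)
  refine ⟨⟨θ, η, ?_, ?_⟩, hθ⟩
  · rw [← cancel_mono φ, Category.assoc, hη, hθ, Category.id_comp]
  · rw [← cancel_mono ψ, Category.assoc, hθ, hη, Category.id_comp]
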